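/- With the notation above (each φ_i invertible), the element 1 + y∘x ∈ End(W) admits the block Gauss decomposition 1 + yx = u₋⁻¹ h u₊, where u₋ = 1 − [ŷⁱ x_j]_{i>j} is block lower-triangular unipotent, h ∈ End(W) is block diagonal with blocks h_i = 1 + ŷⁱ x_i, and u₊ is block upper-triangular unipotent determined by h u₊ = 1 + [ŷⁱ x_j]_{i≤j}. In particular h u₊ − u₋ equals the full 'generalized Gram matrix' [ŷⁱ x_j] ∈ End(W). -/

import Mathlib

open LinearMap in
/-- The block matrix endomorphism of `⊕ W_i` with `(i,j)` block `a i j : W j → W i`. -/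
noncomputable def blockMat5 {s : ℕ} (W : Fin s → Type)
    [∀ i, AddCommGroup (W i)] [∀ i, Module ℂ (W i)]
    (a : ∀ i j : Fin s, W j →ₗ[ℂ] W i) : Module.End ℂ (∀ i, W i) :=
  ∑ i, ∑ j, (LinearMap.single ℂ W i) ∘ₗ (a i j) ∘ₗ (LinearMap.proj j)

section Aux
variable {s : ℕ} {W : Fin s → Type} [∀ i, AddCommGroup (W i)] [∀ i, Module ℂ (W i)]

lemma blockMat5_apply (a : ∀ i j : Fin s, W j →ₗ[ℂ] W i) (w : ∀ i, W i) (i : Fin s) :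
    blockMat5 W a w i = ∑ j, a i j (w j) := by
  rw [blockMat5]
  simp only [LinearMap.sum_apply, Finset.sum_apply, LinearMap.coe_comp, Function.comp_apply,
    LinearMap.coe_single, LinearMap.coe_proj, Function.eval]
  rw [Finset.sum_comm]
  refine Finset.sum_congr rfl fun j _ => ?_
  simp [Pi.single_apply]

lemma ite_lm_apply {M N : Type} [AddCommGroup M] [Module ℂ M] [AddCommGroup N] [Module ℂ N]
    (P : Prop) [Decidable P] (f : M →ₗ[ℂ] N) (v : M) :
    (if P then f else 0) v = if P then f v else 0 := by split_ifs <;> simp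

lemma blockMat5_add (a b : ∀ i j : Fin s, W j →ₗ[ℂ] W i) :
    blockMat5 W (fun i j => a i j + b i j) = blockMat5 W a + blockMat5 W b := by
  simp [blockMat5, LinearMap.comp_add, LinearMap.add_comp, Finset.sum_add_distrib]

lemma lower_nilpotent (c : ∀ i j : Fin s, W j →ₗ[ℂ] W i) (hc : ∀ i j, ¬ j < i → c i j = 0) :
    (blockMat5 W c) ^ s = 0 := by
  have key : ∀ m : ℕ, ∀ w, ∀ i : Fin s, (i : ℕ) < m → ((blockMat5 W c ^ m) w) i = 0 := by
    intro m
    induction m with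
    | zero => exact fun w i hi => absurd hi (Nat.not_lt_zero _)
    | succ m ih =>
      intro w i hi
      rw [pow_succ', Module.End.mul_apply, blockMat5_apply]
      refine Finset.sum_eq_zero fun j _ => ?_
      by_cases hji : j < i
      · have : ((blockMat5 W c ^ m) w) j = 0 := by
          refine ih w j ?_
          have := Fin.lt_def.mp hji
          omega
        rw [this, map_zero]
      · rw [hc i j hji, LinearMap.zero_apply]
  refine LinearMap.ext fun w => funext fun i => ?_
  rw [key s w i i.isLt]; rfl

lemma unit_swap {M N : Type} [AddCommGroup M] [Module ℂ M] [AddCommGroup N] [Module ℂ N]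
    (a : M →ₗ[ℂ] N) (b : N →ₗ[ℂ] M)
    (hu : IsUnit ((1 : Module.End ℂ N) + a ∘ₗ b)) :
    IsUnit ((1 : Module.End ℂ M) + b ∘ₗ a) := by
  set u : Module.End ℂ N := (1 : Module.End ℂ N) + a ∘ₗ b with hu_def
  set u' := Ring.inverse u with hu'_def
  have hu1 : ∀ z : N, u' z + a (b (u' z)) = z := by
    intro z
    have := DFunLike.congr_fun (Ring.mul_inverse_cancel u hu) z
    simpa [hu_def, Module.End.mul_apply] using this
  have hu2 : ∀ z : N, u' (z + a (b z)) = z := by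
    intro z
    have := DFunLike.congr_fun (Ring.inverse_mul_cancel u hu) z
    simpa [hu_def, Module.End.mul_apply] using this
  refine isUnit_iff_exists.2 ⟨1 - b ∘ₗ u' ∘ₗ a, ?_, ?_⟩
  · refine LinearMap.ext fun v => ?_
    simp only [Module.End.mul_apply, LinearMap.add_apply, LinearMap.sub_apply,
      Module.End.one_apply, LinearMap.comp_apply, map_sub, map_add]
    have key : b (u' (a v)) + b (a (b (u' (a v)))) = b (a v) := by
      rw [← map_add b, hu1]
    rw [key]; abel
  · refine LinearMap.ext fun v => ?_
    simp only [Module.End.mul_apply, LinearMap.add_apply, LinearMap.sub_apply,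
      Module.End.one_apply, LinearMap.comp_apply, map_sub, map_add]
    have key : u' (a v + a (b (a v))) = a v := hu2 (a v)
    have key2 : b (u' (a v)) + b (u' (a (b (a v)))) = b (a v) := by
      rw [← map_add, ← map_add, key]
    calc v - b (u' (a v)) + (b (a v) - b (u' (a (b (a v)))))
        = v + (b (a v) - (b (u' (a v)) + b (u' (a (b (a v)))))) := by abel
      _ = v := by rw [key2]; simp

end Aux

/-- Block Gauss decomposition `1 + yx = u₋⁻¹ h u₊` of `1 + y∘x ∈ End(W)`,
`W = ⊕ W_i`: `u₋ = 1 − [ŷⁱ x_j]_{i>j}` lower unipotent, `h` block diagonal with blocks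
`h_i = 1 + ŷⁱ x_i`, `u₊` upper unipotent determined by `h u₊ = 1 + [ŷⁱ x_j]_{i≤j}`; and
`h u₊ − u₋` is the full generalized Gram matrix `[ŷⁱ x_j]`. -/
theorem stmt_5 (V : Type) [AddCommGroup V] [Module ℂ V] [FiniteDimensional ℂ V]
    (s : ℕ) (W : Fin s → Type) [∀ i, AddCommGroup (W i)] [∀ i, Module ℂ (W i)]
    [∀ i, FiniteDimensional ℂ (W i)]
    (x : (∀ i, W i) →ₗ[ℂ] V) (y : V →ₗ[ℂ] ∀ i, W i)
    (xc : ∀ i : Fin s, W i →ₗ[ℂ] V) (yc : ∀ i : Fin s, V →ₗ[ℂ] W i)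
    (hxc : ∀ i, xc i = x ∘ₗ LinearMap.single ℂ W i)
    (hyc : ∀ i, yc i = LinearMap.proj i ∘ₗ y)
    (φ : ℕ → Module.End ℂ V)
    (hφdef : ∀ n, φ n = 1 + ∑ i : Fin s, if (i : ℕ) < n then (xc i) ∘ₗ (yc i) else 0)
    (hφ : ∀ n, IsUnit (φ n))
    (yhat : ∀ i : Fin s, V →ₗ[ℂ] W i)
    (hyhat : ∀ i, yhat i = (yc i) ∘ₗ Ring.inverse (φ i))
    (um : Module.End ℂ (∀ i, W i))
    (hum : um = 1 - blockMat5 W (fun i j => if j < i then (yhat i) ∘ₗ (xc j) else 0))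
    (h : Module.End ℂ (∀ i, W i))
    (hh : h = 1 + blockMat5 W (fun i j => if i = j then (yhat i) ∘ₗ (xc j) else 0)) :
    ∃ up : Module.End ℂ (∀ i, W i),
      (∃ c : ∀ i j : Fin s, W j →ₗ[ℂ] W i,
          (∀ i j, ¬ i < j → c i j = 0) ∧ up = 1 + blockMat5 W c) ∧
      h * up = 1 + blockMat5 W (fun i j => if i ≤ j then (yhat i) ∘ₗ (xc j) else 0) ∧
      IsUnit um ∧ IsUnit h ∧
      (1 : Module.End ℂ (∀ i, W i)) + y ∘ₗ x = Ring.inverse um * h * up ∧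
      h * up - um = blockMat5 W (fun i j => (yhat i) ∘ₗ (xc j)) := by
  classical
  -- the diagonal blocks h_i = 1 + ŷⁱ x_i and their invertibility
  have hstep : ∀ i : Fin s, φ ((i : ℕ) + 1) = φ i + (xc i) ∘ₗ (yc i) := by
    intro i
    rw [hφdef, hφdef]
    have hsplit : ∀ k : Fin s, (if (k : ℕ) < (i : ℕ) + 1 then (xc k) ∘ₗ (yc k) else 0)
        = (if (k : ℕ) < (i : ℕ) then (xc k) ∘ₗ (yc k) else 0)
          + (if k = i then (xc k) ∘ₗ (yc k) else 0) := by
      intro k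
      by_cases h2 : k = i
      · subst h2; simp
      · have hk : (k : ℕ) ≠ (i : ℕ) := fun hcon => h2 (Fin.ext hcon)
        have he : ((k : ℕ) < (i : ℕ) + 1) ↔ ((k : ℕ) < (i : ℕ)) := by omega
        simp [he, h2]
    rw [Finset.sum_congr rfl (fun k _ => hsplit k), Finset.sum_add_distrib]
    rw [Finset.sum_ite_eq' Finset.univ i (fun k => (xc k) ∘ₗ (yc k))]
    simp [add_assoc]
  have hdunit : ∀ i : Fin s, IsUnit ((1 : Module.End ℂ (W i)) + (yhat i) ∘ₗ (xc i)) := by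
    intro i
    apply unit_swap (xc i) (yhat i)
    have key : (1 : Module.End ℂ V) + (xc i) ∘ₗ (yhat i)
        = φ ((i : ℕ) + 1) * Ring.inverse (φ (i : ℕ)) := by
      rw [hstep i, add_mul, Ring.mul_inverse_cancel _ (hφ i)]
      congr 1
      rw [hyhat, Module.End.mul_eq_comp, LinearMap.comp_assoc]
    rw [key]
    exact (hφ _).mul (isUnit_ringInverse.2 (hφ i))
  -- pointwise facts about the diagonal blocks
  have hinvhd : ∀ (i : Fin s) (v : W i),
      Ring.inverse ((1 : Module.End ℂ (W i)) + yhat i ∘ₗ xc i) (v + yhat i (xc i v)) = v := by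
    intro i v
    have := DFunLike.congr_fun
      (Ring.inverse_mul_cancel ((1 : Module.End ℂ (W i)) + yhat i ∘ₗ xc i) (hdunit i)) v
    simpa [Module.End.mul_apply] using this
  have hhdinv : ∀ (i : Fin s) (v : W i),
      (Ring.inverse ((1 : Module.End ℂ (W i)) + yhat i ∘ₗ xc i) v)
        + yhat i (xc i (Ring.inverse ((1 : Module.End ℂ (W i)) + yhat i ∘ₗ xc i) v)) = v := by
    intro i v
    have := DFunLike.congr_fun
      (Ring.mul_inverse_cancel ((1 : Module.End ℂ (W i)) + yhat i ∘ₗ xc i) (hdunit i)) v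
    simpa [Module.End.mul_apply] using this
  -- the upper unipotent factor
  set cup : ∀ i j : Fin s, W j →ₗ[ℂ] W i := fun i j =>
    if i < j then
      (Ring.inverse ((1 : Module.End ℂ (W i)) + yhat i ∘ₗ xc i)) ∘ₗ ((yhat i) ∘ₗ (xc j))
    else 0 with hcup
  refine ⟨1 + blockMat5 W cup, ⟨cup, fun i j hij => by simp [hcup, hij], rfl⟩, ?_⟩
  have happly : ∀ (z : ∀ i, W i) (i : Fin s), h z i = z i + yhat i (xc i (z i)) := by
    intro z i
    rw [hh]
    simp only [LinearMap.add_apply, Module.End.one_apply, Pi.add_apply, blockMat5_apply, ite_lm_apply,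
      LinearMap.coe_comp, Function.comp_apply]
    rw [Finset.sum_ite_eq Finset.univ i (fun j => yhat i (xc j (z j)))]
    simp
  have hupapply : ∀ (w : ∀ i, W i) (k : Fin s),
      ((1 + blockMat5 W cup) w) k = w k + ∑ j, if k < j then
        (Ring.inverse ((1 : Module.End ℂ (W k)) + yhat k ∘ₗ xc k)) ((yhat k) ((xc j) (w j)))
      else 0 := by
    intro w k
    simp only [LinearMap.add_apply, Module.End.one_apply, Pi.add_apply, blockMat5_apply, hcup, ite_lm_apply,
      LinearMap.coe_comp, Function.comp_apply]
  have hsplitle : ∀ (i : Fin s) (f : Fin s → W i),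
      ∑ j, (if i ≤ j then f j else 0) = f i + ∑ j, (if i < j then f j else 0) := by
    intro i f
    have hterm : ∀ j, (if i ≤ j then f j else 0)
        = (if i = j then f j else 0) + (if i < j then f j else 0) := by
      intro j
      rcases lt_trichotomy i j with hlt | heq | hgt
      · simp [hlt.le, hlt, hlt.ne]
      · subst heq; simp
      · simp [not_le.2 hgt, hgt.ne', not_lt.2 hgt.le]
    rw [Finset.sum_congr rfl (fun j _ => hterm j), Finset.sum_add_distrib,
      Finset.sum_ite_eq Finset.univ i f]
    simp
  have hgauss : h * (1 + blockMat5 W cup)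
      = 1 + blockMat5 W (fun i j => if i ≤ j then (yhat i) ∘ₗ (xc j) else 0) := by
    refine LinearMap.ext fun w => funext fun i => ?_
    rw [Module.End.mul_apply, happly, hupapply]
    have hrhs : ((1 + blockMat5 W (fun i j => if i ≤ j then (yhat i) ∘ₗ (xc j) else 0)) w) i
        = w i + ∑ j, (if i ≤ j then yhat i (xc j (w j)) else 0) := by
      simp only [LinearMap.add_apply, Module.End.one_apply, Pi.add_apply, blockMat5_apply, ite_lm_apply,
        LinearMap.coe_comp, Function.comp_apply]
    rw [hrhs, hsplitle i (fun j => yhat i (xc j (w j)))]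
    set S := ∑ j, if i < j then
      (Ring.inverse ((1 : Module.End ℂ (W i)) + yhat i ∘ₗ xc i)) ((yhat i) ((xc j) (w j)))
      else 0 with hS_def
    have hkey : S + yhat i (xc i S) = ∑ j, (if i < j then yhat i (xc j (w j)) else 0) := by
      rw [hS_def, map_sum, map_sum, ← Finset.sum_add_distrib]
      refine Finset.sum_congr rfl fun j _ => ?_
      by_cases hij : i < j
      · simp only [hij, if_true]
        exact hhdinv i (yhat i (xc j (w j)))
      · simp [hij]
    calc w i + S + yhat i (xc i (w i + S))
        = (w i + yhat i (xc i (w i))) + (S + yhat i (xc i S)) := by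
          rw [map_add (xc i), map_add (yhat i)]; abel
      _ = w i + (yhat i (xc i (w i)) + ∑ j, (if i < j then yhat i (xc j (w j)) else 0)) := by
          rw [hkey]; abel
  have humunit : IsUnit um := by
    rw [hum]
    exact IsNilpotent.isUnit_one_sub ⟨s, lower_nilpotent _ (fun i j hij => by simp [hij])⟩
  have hunit : IsUnit h := by
    set e : ∀ i j : Fin s, W j →ₗ[ℂ] W i := fun i j =>
      if i = j then
        -((Ring.inverse ((1 : Module.End ℂ (W i)) + yhat i ∘ₗ xc i)) ∘ₗ ((yhat i) ∘ₗ (xc j)))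
      else 0 with he
    have hinvapply : ∀ (z : ∀ i, W i) (k : Fin s),
        ((1 + blockMat5 W e) z) k
          = z k - (Ring.inverse ((1 : Module.End ℂ (W k)) + yhat k ∘ₗ xc k))
              (yhat k (xc k (z k))) := by
      intro z k
      simp only [LinearMap.add_apply, Module.End.one_apply, Pi.add_apply, blockMat5_apply, he,
        ite_lm_apply, LinearMap.coe_comp, Function.comp_apply, LinearMap.neg_apply]
      rw [Finset.sum_ite_eq Finset.univ k
        (fun j => -(Ring.inverse ((1 : Module.End ℂ (W k)) + yhat k ∘ₗ xc k))
          ((yhat k) ((xc j) (z j))))]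
      simp [sub_eq_add_neg]
    refine isUnit_iff_exists.2 ⟨1 + blockMat5 W e, ?_, ?_⟩
    · refine LinearMap.ext fun z => funext fun i => ?_
      rw [Module.End.mul_apply, happly, hinvapply]
      show z i - Ring.inverse ((1 : Module.End ℂ (W i)) + yhat i ∘ₗ xc i) (yhat i (xc i (z i)))
          + yhat i (xc i (z i - Ring.inverse ((1 : Module.End ℂ (W i)) + yhat i ∘ₗ xc i)
            (yhat i (xc i (z i))))) = (1 : Module.End ℂ (∀ i, W i)) z i
      set q := Ring.inverse ((1 : Module.End ℂ (W i)) + yhat i ∘ₗ xc i)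
        (yhat i (xc i (z i))) with hq
      have key : q + yhat i (xc i q) = yhat i (xc i (z i)) := hhdinv i (yhat i (xc i (z i)))
      rw [map_sub (xc i), map_sub (yhat i)]
      have hone : (1 : Module.End ℂ (∀ i, W i)) z i = z i := rfl
      rw [hone]
      calc z i - q + (yhat i (xc i (z i)) - yhat i (xc i q))
          = z i + (yhat i (xc i (z i)) - (q + yhat i (xc i q))) := by abel
        _ = z i := by rw [key]; simp
    · refine LinearMap.ext fun z => funext fun i => ?_
      rw [Module.End.mul_apply, hinvapply, happly]
      set t := z i with ht
      have k1 : Ring.inverse ((1 : Module.End ℂ (W i)) + yhat i ∘ₗ xc i)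
          ((t + yhat i (xc i t)) + yhat i (xc i (t + yhat i (xc i t))))
          = t + yhat i (xc i t) := hinvhd i (t + yhat i (xc i t))
      have k2 : Ring.inverse ((1 : Module.End ℂ (W i)) + yhat i ∘ₗ xc i)
          (t + yhat i (xc i t)) = t := hinvhd i t
      have k3 : Ring.inverse ((1 : Module.End ℂ (W i)) + yhat i ∘ₗ xc i)
          (yhat i (xc i (t + yhat i (xc i t)))) = yhat i (xc i t) := by
        have hrw : yhat i (xc i (t + yhat i (xc i t)))
            = ((t + yhat i (xc i t)) + yhat i (xc i (t + yhat i (xc i t))))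
              - (t + yhat i (xc i t)) := by abel
        rw [hrw, map_sub, k1, k2]; abel
      rw [k3]
      have hone : (1 : Module.End ℂ (∀ i, W i)) z i = t := rfl
      rw [hone]; abel
  have hx : ∀ w : (∀ i, W i), x w = ∑ j, xc j (w j) := by
    intro w
    have hw : w = ∑ j, Pi.single j (w j) := (Finset.univ_sum_single w).symm
    conv_lhs => rw [hw]
    rw [map_sum]
    refine Finset.sum_congr rfl fun j _ => ?_
    rw [hxc]; rfl
  have hyhatphi : ∀ (i : Fin s) (v : V), yhat i (φ (i : ℕ) v) = yc i v := by
    intro i v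
    rw [hyhat]
    have hv : Ring.inverse (φ (i : ℕ)) (φ (i : ℕ) v) = v := by
      have := DFunLike.congr_fun (Ring.inverse_mul_cancel (φ (i : ℕ)) (hφ i)) v
      simpa [Module.End.mul_apply] using this
    simp [LinearMap.comp_apply, hv]
  have hphiapp : ∀ (i : Fin s) (v : V),
      φ (i : ℕ) v = v + ∑ j, (if j < i then xc j (yc j v) else 0) := by
    intro i v
    rw [hφdef]
    simp only [LinearMap.add_apply, Module.End.one_apply, LinearMap.sum_apply, ite_lm_apply,
      LinearMap.coe_comp, Function.comp_apply]
    congr 1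
  have humyx : um * ((1 : Module.End ℂ (∀ i, W i)) + y ∘ₗ x)
      = 1 + blockMat5 W (fun i j => if i ≤ j then (yhat i) ∘ₗ (xc j) else 0) := by
    refine LinearMap.ext fun w => funext fun i => ?_
    rw [Module.End.mul_apply]
    set v := ((1 : Module.End ℂ (∀ i, W i)) + y ∘ₗ x) w with hv_def
    have hvk : ∀ k : Fin s, v k = w k + yc k (x w) := by
      intro k
      rw [hv_def]
      simp only [LinearMap.add_apply, Module.End.one_apply, Pi.add_apply, LinearMap.coe_comp,
        Function.comp_apply]
      rw [hyc]; rfl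
    rw [hum]
    simp only [LinearMap.sub_apply, Module.End.one_apply, Pi.sub_apply, blockMat5_apply,
      ite_lm_apply, LinearMap.coe_comp, Function.comp_apply, LinearMap.add_apply, Pi.add_apply]
    have hsum : ∑ j, (if j < i then yhat i (xc j (v j)) else 0)
        = (∑ j, (if j < i then yhat i (xc j (w j)) else 0))
          + yhat i ((φ (i : ℕ)) (x w) - x w) := by
      have hterm : ∀ j : Fin s, (if j < i then yhat i (xc j (v j)) else 0)
          = (if j < i then yhat i (xc j (w j)) else 0)
            + (if j < i then yhat i (xc j (yc j (x w))) else 0) := by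
        intro j
        by_cases hj : j < i
        · simp [hj, hvk j, map_add]
        · simp [hj]
      rw [Finset.sum_congr rfl fun j _ => hterm j, Finset.sum_add_distrib]
      congr 1
      rw [hphiapp i (x w), add_sub_cancel_left, map_sum]
      refine Finset.sum_congr rfl fun j _ => ?_
      by_cases hj : j < i <;> simp [hj]
    have hfullsplit : yhat i (x w)
        = (∑ j, (if i ≤ j then yhat i (xc j (w j)) else 0))
          + (∑ j, (if j < i then yhat i (xc j (w j)) else 0)) := by
      rw [hx w, map_sum, ← Finset.sum_add_distrib]
      refine Finset.sum_congr rfl fun j _ => ?_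
      by_cases hij : i ≤ j
      · simp [hij, not_lt.2 hij]
      · simp [hij, not_le.1 hij]
    rw [hvk i, hsum, map_sub (yhat i), hyhatphi]
    rw [hfullsplit]
    abel
  refine ⟨hgauss, humunit, hunit, ?_, ?_⟩
  · -- main identity
    calc (1 : Module.End ℂ (∀ i, W i)) + y ∘ₗ x
        = (Ring.inverse um * um) * ((1 : Module.End ℂ (∀ i, W i)) + y ∘ₗ x) := by
          rw [Ring.inverse_mul_cancel um humunit, one_mul]
      _ = Ring.inverse um * (um * ((1 : Module.End ℂ (∀ i, W i)) + y ∘ₗ x)) := by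
          rw [mul_assoc]
      _ = Ring.inverse um * (h * (1 + blockMat5 W cup)) := by rw [humyx, ← hgauss]
      _ = Ring.inverse um * h * (1 + blockMat5 W cup) := by rw [mul_assoc]
  · -- subtraction
    rw [hgauss, hum]
    have hfull : blockMat5 W (fun i j => (yhat i) ∘ₗ (xc j))
        = blockMat5 W (fun i j => if i ≤ j then (yhat i) ∘ₗ (xc j) else 0)
          + blockMat5 W (fun i j => if j < i then (yhat i) ∘ₗ (xc j) else 0) := by
      rw [← blockMat5_add]
      congr 1
      funext i j
      by_cases hij : i ≤ j
      · simp [hij, not_lt.2 hij]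
      · simp [hij, not_le.1 hij]
    rw [hfull]
    abel
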